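/- Let Z ∈ {0,1}, R ∈ {0,1}, X, Y(0), Y(1) be random variables with Z ⊥ (Y(0), Y(1)) | (X, R=1) and conditional densities well-defined. Then P(R=1 | Y(0), Y(1), X, Z=1)/P(R=1 | Y(0), Y(1), X, Z=0) = [P(Z=1|X, R=1)/P(Z=0|X, R=1)] · [P(Z=0|X, Y(0), Y(1))/P(Z=1|X, Y(0), Y(1))], assuming all probabilities are positive. In particular, if additionally Z ⊥ (Y(0), Y(1), X), this ratio is a function of X alone. -/

import Mathlib

lemma sum_if_iff {Ω : Type*} [Fintype Ω] (P : Ω → ℝ) (c1 c2 : Ω → Prop)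
    [DecidablePred c1] [DecidablePred c2] (h : ∀ ω, c1 ω ↔ c2 ω) :
    ∑ ω, (if c1 ω then P ω else 0) = ∑ ω, (if c2 ω then P ω else 0) :=
  Finset.sum_congr rfl fun ω _ => if_congr (h ω) rfl rfl

lemma sum_if_nonneg {Ω : Type*} [Fintype Ω] (P : Ω → ℝ) (hP : ∀ ω, 0 ≤ P ω)
    (c : Ω → Prop) [DecidablePred c] :
    0 ≤ ∑ ω, (if c ω then P ω else 0) :=
  Finset.sum_nonneg fun ω _ => by split_ifs; exacts [hP ω, le_rfl]

lemma sum_if_mono {Ω : Type*} [Fintype Ω] (P : Ω → ℝ) (hP : ∀ ω, 0 ≤ P ω)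
    (c1 c2 : Ω → Prop) [DecidablePred c1] [DecidablePred c2] (h : ∀ ω, c1 ω → c2 ω) :
    ∑ ω, (if c1 ω then P ω else 0) ≤ ∑ ω, (if c2 ω then P ω else 0) := by
  refine Finset.sum_le_sum fun ω _ => ?_
  by_cases h1 : c1 ω
  · rw [if_pos h1, if_pos (h ω h1)]
  · rw [if_neg h1]; split_ifs; exacts [hP ω, le_rfl]

/-- Subset ignorability implies the recruitment probability ratio decomposes as
`P(R=1|Y,X,Z=1)/P(R=1|Y,X,Z=0)
  = [P(Z=1|X,R=1)/P(Z=0|X,R=1)] · [P(Z=0|X,Y)/P(Z=1|X,Y)]`;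
and if in addition `Z ⊥ (Y(0), Y(1), X)`, the ratio is a function of `X` alone. -/
theorem stmt16 {Ω 𝒴 𝒳 : Type*} [Fintype Ω] [DecidableEq 𝒴] [DecidableEq 𝒳]
    (P : Ω → ℝ) (hP : ∀ ω, 0 ≤ P ω) (hP1 : ∑ ω, P ω = 1)
    (Z R : Ω → Bool) (Y0 Y1 : Ω → 𝒴) (X : Ω → 𝒳)
    -- subset ignorability: Z ⊥ (Y0, Y1) | X on {R = 1}, in cross-multiplied form
    (hSI : ∀ (z : Bool) (y0 y1 : 𝒴) (x : 𝒳),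
      (∑ ω, if Z ω = z ∧ Y0 ω = y0 ∧ Y1 ω = y1 ∧ X ω = x ∧ R ω = true then P ω else 0) *
        (∑ ω, if X ω = x ∧ R ω = true then P ω else 0)
      = (∑ ω, if Z ω = z ∧ X ω = x ∧ R ω = true then P ω else 0) *
        (∑ ω, if Y0 ω = y0 ∧ Y1 ω = y1 ∧ X ω = x ∧ R ω = true then P ω else 0)) :
    (∀ (y0 y1 : 𝒴) (x : 𝒳),
      (0 < ∑ ω, if Z ω = true ∧ Y0 ω = y0 ∧ Y1 ω = y1 ∧ X ω = x then P ω else 0) →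
      (0 < ∑ ω, if Z ω = false ∧ Y0 ω = y0 ∧ Y1 ω = y1 ∧ X ω = x then P ω else 0) →
      (0 < ∑ ω, if Z ω = false ∧ Y0 ω = y0 ∧ Y1 ω = y1 ∧ X ω = x ∧ R ω = true then P ω else 0) →
      (0 < ∑ ω, if Z ω = true ∧ X ω = x ∧ R ω = true then P ω else 0) →
      (0 < ∑ ω, if Z ω = false ∧ X ω = x ∧ R ω = true then P ω else 0) →
      ((∑ ω, if R ω = true ∧ Y0 ω = y0 ∧ Y1 ω = y1 ∧ X ω = x ∧ Z ω = true then P ω else 0) /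
        (∑ ω, if Y0 ω = y0 ∧ Y1 ω = y1 ∧ X ω = x ∧ Z ω = true then P ω else 0)) /
      ((∑ ω, if R ω = true ∧ Y0 ω = y0 ∧ Y1 ω = y1 ∧ X ω = x ∧ Z ω = false then P ω else 0) /
        (∑ ω, if Y0 ω = y0 ∧ Y1 ω = y1 ∧ X ω = x ∧ Z ω = false then P ω else 0))
      = ((∑ ω, if Z ω = true ∧ X ω = x ∧ R ω = true then P ω else 0) /
          (∑ ω, if Z ω = false ∧ X ω = x ∧ R ω = true then P ω else 0)) *
        ((∑ ω, if Z ω = false ∧ Y0 ω = y0 ∧ Y1 ω = y1 ∧ X ω = x then P ω else 0) /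
          (∑ ω, if Z ω = true ∧ Y0 ω = y0 ∧ Y1 ω = y1 ∧ X ω = x then P ω else 0)))
    ∧
    ((∀ (z : Bool) (y0 y1 : 𝒴) (x : 𝒳),
        (∑ ω, if Z ω = z ∧ Y0 ω = y0 ∧ Y1 ω = y1 ∧ X ω = x then P ω else 0)
          = (∑ ω, if Z ω = z then P ω else 0) *
            (∑ ω, if Y0 ω = y0 ∧ Y1 ω = y1 ∧ X ω = x then P ω else 0)) →
      ∃ d : 𝒳 → ℝ, ∀ (y0 y1 : 𝒴) (x : 𝒳),
        (0 < ∑ ω, if Y0 ω = y0 ∧ Y1 ω = y1 ∧ X ω = x ∧ Z ω = true then P ω else 0) →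
        (0 < ∑ ω, if Y0 ω = y0 ∧ Y1 ω = y1 ∧ X ω = x ∧ Z ω = false then P ω else 0) →
        (0 < ∑ ω, if R ω = true ∧ Y0 ω = y0 ∧ Y1 ω = y1 ∧ X ω = x ∧ Z ω = false then P ω else 0) →
        ((∑ ω, if R ω = true ∧ Y0 ω = y0 ∧ Y1 ω = y1 ∧ X ω = x ∧ Z ω = true then P ω else 0) /
          (∑ ω, if Y0 ω = y0 ∧ Y1 ω = y1 ∧ X ω = x ∧ Z ω = true then P ω else 0)) /
        ((∑ ω, if R ω = true ∧ Y0 ω = y0 ∧ Y1 ω = y1 ∧ X ω = x ∧ Z ω = false then P ω else 0) /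
          (∑ ω, if Y0 ω = y0 ∧ Y1 ω = y1 ∧ X ω = x ∧ Z ω = false then P ω else 0)) = d x) := by
  -- canonical names
  have key : ∀ (y0 y1 : 𝒴) (x : 𝒳),
      (0 < ∑ ω, if Z ω = false ∧ Y0 ω = y0 ∧ Y1 ω = y1 ∧ X ω = x ∧ R ω = true then P ω else 0) →
      (∑ ω, if Z ω = true ∧ Y0 ω = y0 ∧ Y1 ω = y1 ∧ X ω = x ∧ R ω = true then P ω else 0) *
        (∑ ω, if Z ω = false ∧ X ω = x ∧ R ω = true then P ω else 0)
      = (∑ ω, if Z ω = true ∧ X ω = x ∧ R ω = true then P ω else 0) *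
        (∑ ω, if Z ω = false ∧ Y0 ω = y0 ∧ Y1 ω = y1 ∧ X ω = x ∧ R ω = true then P ω else 0) := by
    intro y0 y1 x hA0
    have hE : 0 < ∑ ω, if X ω = x ∧ R ω = true then P ω else 0 :=
      lt_of_lt_of_le hA0 (sum_if_mono P hP _ _ (by tauto))
    have h1 := hSI true y0 y1 x
    have h2 := hSI false y0 y1 x
    apply mul_right_cancel₀ (ne_of_gt hE)
    linear_combination
      (∑ ω, if Z ω = false ∧ X ω = x ∧ R ω = true then P ω else 0) * h1 -
      (∑ ω, if Z ω = true ∧ X ω = x ∧ R ω = true then P ω else 0) * h2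
  constructor
  · intro y0 y1 x hB1 hB0 hA0 hC1 hC0
    have e1 : (∑ ω, if R ω = true ∧ Y0 ω = y0 ∧ Y1 ω = y1 ∧ X ω = x ∧ Z ω = true then P ω else 0)
        = ∑ ω, if Z ω = true ∧ Y0 ω = y0 ∧ Y1 ω = y1 ∧ X ω = x ∧ R ω = true then P ω else 0 :=
      sum_if_iff P _ _ (by tauto)
    have e0 : (∑ ω, if R ω = true ∧ Y0 ω = y0 ∧ Y1 ω = y1 ∧ X ω = x ∧ Z ω = false then P ω else 0)
        = ∑ ω, if Z ω = false ∧ Y0 ω = y0 ∧ Y1 ω = y1 ∧ X ω = x ∧ R ω = true then P ω else 0 :=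
      sum_if_iff P _ _ (by tauto)
    have f1 : (∑ ω, if Y0 ω = y0 ∧ Y1 ω = y1 ∧ X ω = x ∧ Z ω = true then P ω else 0)
        = ∑ ω, if Z ω = true ∧ Y0 ω = y0 ∧ Y1 ω = y1 ∧ X ω = x then P ω else 0 :=
      sum_if_iff P _ _ (by tauto)
    have f0 : (∑ ω, if Y0 ω = y0 ∧ Y1 ω = y1 ∧ X ω = x ∧ Z ω = false then P ω else 0)
        = ∑ ω, if Z ω = false ∧ Y0 ω = y0 ∧ Y1 ω = y1 ∧ X ω = x then P ω else 0 :=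
      sum_if_iff P _ _ (by tauto)
    rw [e1, e0, f1, f0]
    have hk := key y0 y1 x hA0
    field_simp
    linear_combination hk
  · intro hrand
    refine ⟨fun x =>
      ((∑ ω, if Z ω = true ∧ X ω = x ∧ R ω = true then P ω else 0) /
        (∑ ω, if Z ω = false ∧ X ω = x ∧ R ω = true then P ω else 0)) *
      ((∑ ω, if Z ω = false then P ω else 0) / (∑ ω, if Z ω = true then P ω else 0)), ?_⟩
    intro y0 y1 x hB1' hB0' hA0'
    have e1 : (∑ ω, if R ω = true ∧ Y0 ω = y0 ∧ Y1 ω = y1 ∧ X ω = x ∧ Z ω = true then P ω else 0)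
        = ∑ ω, if Z ω = true ∧ Y0 ω = y0 ∧ Y1 ω = y1 ∧ X ω = x ∧ R ω = true then P ω else 0 :=
      sum_if_iff P _ _ (by tauto)
    have e0 : (∑ ω, if R ω = true ∧ Y0 ω = y0 ∧ Y1 ω = y1 ∧ X ω = x ∧ Z ω = false then P ω else 0)
        = ∑ ω, if Z ω = false ∧ Y0 ω = y0 ∧ Y1 ω = y1 ∧ X ω = x ∧ R ω = true then P ω else 0 :=
      sum_if_iff P _ _ (by tauto)
    have f1 : (∑ ω, if Y0 ω = y0 ∧ Y1 ω = y1 ∧ X ω = x ∧ Z ω = true then P ω else 0)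
        = ∑ ω, if Z ω = true ∧ Y0 ω = y0 ∧ Y1 ω = y1 ∧ X ω = x then P ω else 0 :=
      sum_if_iff P _ _ (by tauto)
    have f0 : (∑ ω, if Y0 ω = y0 ∧ Y1 ω = y1 ∧ X ω = x ∧ Z ω = false then P ω else 0)
        = ∑ ω, if Z ω = false ∧ Y0 ω = y0 ∧ Y1 ω = y1 ∧ X ω = x then P ω else 0 :=
      sum_if_iff P _ _ (by tauto)
    rw [e1, e0, f1, f0]
    rw [e0] at hA0'
    rw [f1] at hB1'
    rw [f0] at hB0'
    have hA0 := hA0'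
    -- randomization decomposition
    have hr1 := hrand true y0 y1 x
    have hr0 := hrand false y0 y1 x
    set p1 := ∑ ω, if Z ω = true then P ω else 0 with hp1def
    set p0 := ∑ ω, if Z ω = false then P ω else 0 with hp0def
    set M := ∑ ω, if Y0 ω = y0 ∧ Y1 ω = y1 ∧ X ω = x then P ω else 0 with hMdef
    have hp1n : 0 ≤ p1 := sum_if_nonneg P hP _
    have hp0n : 0 ≤ p0 := sum_if_nonneg P hP _
    have hMn : 0 ≤ M := sum_if_nonneg P hP _
    have hB1 := hB1'; rw [hr1] at hB1
    have hB0 := hB0'; rw [hr0] at hB0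
    have hM : 0 < M := by nlinarith
    have hp1 : 0 < p1 := by nlinarith
    have hp0 : 0 < p0 := by nlinarith
    -- C0 > 0
    have hE : 0 < ∑ ω, if X ω = x ∧ R ω = true then P ω else 0 :=
      lt_of_lt_of_le hA0 (sum_if_mono P hP _ _ (by tauto))
    have hC0n : 0 ≤ ∑ ω, if Z ω = false ∧ X ω = x ∧ R ω = true then P ω else 0 :=
      sum_if_nonneg P hP _
    have hDn : 0 ≤ ∑ ω, if Y0 ω = y0 ∧ Y1 ω = y1 ∧ X ω = x ∧ R ω = true then P ω else 0 :=
      sum_if_nonneg P hP _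
    have h2 := hSI false y0 y1 x
    have hC0 : 0 < ∑ ω, if Z ω = false ∧ X ω = x ∧ R ω = true then P ω else 0 := by
      nlinarith
    have hk := key y0 y1 x hA0
    rw [hr1, hr0]
    field_simp
    linear_combination hk
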